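/- The derivative of x(m) = −1/m + ∫ t/(1 + c m t) dν(t) on (−1/(c b_ν), 0) is x'(m) = 1/m² − c ∫ (t/(1 + c m t))² dν(t), and x' is continuous and strictly increasing on this interval, with x'(m) → +∞ as m ↑ 0. -/

import Mathlib

open MeasureTheory Set Filter Metric

theorem stmt2
    (ν : Measure ℝ) [IsProbabilityMeasure ν]
    (aν bν c : ℝ) (haν : 0 < aν) (hab : aν ≤ bν) (hc : 0 < c)
    (hsupp : ν (Icc aν bν)ᶜ = 0)
    (x x' : ℝ → ℝ)
    (hx : ∀ m ∈ Ioo (-(1 / (c * bν))) 0,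
      x m = -(1 / m) + ∫ t, t / (1 + c * m * t) ∂ν)
    (hx' : ∀ m ∈ Ioo (-(1 / (c * bν))) 0,
      x' m = 1 / m ^ 2 - c * ∫ t, (t / (1 + c * m * t)) ^ 2 ∂ν) :
    (∀ m ∈ Ioo (-(1 / (c * bν))) 0, HasDerivAt x (x' m) m) ∧
    ContinuousOn x' (Ioo (-(1 / (c * bν))) 0) ∧
    StrictMonoOn x' (Ioo (-(1 / (c * bν))) 0) ∧
    Tendsto x' (nhdsWithin 0 (Iio 0)) atTop := by
  have hb : 0 < bν := lt_of_lt_of_le haν hab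
  have hcb : 0 < c * bν := mul_pos hc hb
  obtain ⟨L, hLdef⟩ : ∃ L : ℝ, L = -(1 / (c * bν)) := ⟨_, rfl⟩
  rw [← hLdef] at hx hx' ⊢
  have hL0 : L < 0 := by rw [hLdef]; simp; positivity
  -- a.e. membership in Icc
  have hae : ∀ᵐ t ∂ν, t ∈ Icc aν bν := by
    rw [ae_iff]
    convert hsupp using 2
    rfl
  -- positivity of 1 + c m bν for m > L
  have hpos : ∀ m : ℝ, L < m → 0 < 1 + c * m * bν := by
    intro m hm
    rw [hLdef] at hm; rw [neg_lt] at hm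
    have h2 := (lt_div_iff₀ hcb).mp hm
    nlinarith
  -- denominator bound
  have hden : ∀ m : ℝ, m ≤ 0 → ∀ t ∈ Icc aν bν, c * m * bν ≤ c * m * t := by
    intro m hm t ht
    nlinarith [ht.2, mul_nonpos_of_nonneg_of_nonpos hc.le hm]
  have hdenpos : ∀ m : ℝ, L < m → m ≤ 0 → ∀ t ∈ Icc aν bν,
      0 < 1 + c * m * bν ∧ 1 + c * m * bν ≤ 1 + c * m * t := by
    intro m hm1 hm2 t ht
    exact ⟨hpos m hm1, by linarith [hden m hm2 t ht]⟩
  -- quotient bounds: for m ∈ (L,0], t ∈ Icc, 0 ≤ t/(1+cmt) ≤ bν/(1+c m bν)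
  have hquot : ∀ m : ℝ, L < m → m ≤ 0 → ∀ t ∈ Icc aν bν,
      0 ≤ t / (1 + c * m * t) ∧ t / (1 + c * m * t) ≤ bν / (1 + c * m * bν) := by
    intro m hm1 hm2 t ht
    obtain ⟨h1, h2⟩ := hdenpos m hm1 hm2 t ht
    have h3 : 0 < 1 + c * m * t := lt_of_lt_of_le h1 h2
    constructor
    · exact div_nonneg (haν.le.trans ht.1) h3.le
    · exact div_le_div₀ (haν.le.trans (ht.1.trans ht.2)) ht.2 h1 h2
  -- measurability
  have hmeas1 : ∀ m : ℝ, AEStronglyMeasurable (fun t => t / (1 + c * m * t)) ν := by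
    intro m
    exact (measurable_id.div (measurable_const.add (measurable_const.mul measurable_id))).aestronglyMeasurable
  have hmeas2 : ∀ m : ℝ, AEStronglyMeasurable (fun t => (t / (1 + c * m * t)) ^ 2) ν := by
    intro m
    exact ((measurable_id.div (measurable_const.add (measurable_const.mul measurable_id))).pow_const 2).aestronglyMeasurable
  -- integrability
  have hint1 : ∀ m : ℝ, L < m → m ≤ 0 → Integrable (fun t => t / (1 + c * m * t)) ν := by
    intro m hm1 hm2
    refine (integrable_const (bν / (1 + c * m * bν))).mono' (hmeas1 m) ?_
    filter_upwards [hae] with t ht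
    have h := hquot m hm1 hm2 t ht
    rw [Real.norm_eq_abs, abs_of_nonneg h.1]
    exact h.2
  have hint2 : ∀ m : ℝ, L < m → m ≤ 0 → Integrable (fun t => (t / (1 + c * m * t)) ^ 2) ν := by
    intro m hm1 hm2
    refine (integrable_const ((bν / (1 + c * m * bν)) ^ 2)).mono' (hmeas2 m) ?_
    filter_upwards [hae] with t ht
    have h := hquot m hm1 hm2 t ht
    rw [Real.norm_eq_abs, abs_of_nonneg (by positivity)]
    exact pow_le_pow_left₀ h.1 h.2 2
  -- ball setup around a point m₀ ∈ Ioo L 0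
  have hball : ∀ m₀ ∈ Ioo L 0, ∃ ε > 0, ∃ m₁ ∈ Ioo L 0,
      ∀ m ∈ ball m₀ ε, m₁ ≤ m ∧ m < 0 := by
    intro m₀ hm₀
    refine ⟨min ((m₀ - L) / 2) (-m₀ / 2), by
      have := hm₀.1; have := hm₀.2
      apply lt_min <;> linarith, (m₀ + L) / 2, ⟨by linarith [hm₀.1], by linarith [hm₀.1, hm₀.2, hL0]⟩, ?_⟩
    have hA := hm₀.1
    have hB := hm₀.2
    intro m hm
    rw [mem_ball, Real.dist_eq, abs_lt] at hm
    obtain ⟨hm1, hm2⟩ := hm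
    have h1 := lt_of_lt_of_le hm2 (min_le_right _ _)
    have h2 := lt_of_le_of_lt (neg_le_neg (min_le_left ((m₀ - L)/2) (-m₀ / 2))) hm1
    constructor <;> linarith
  -- key: derivative of the integral term
  have hkey : ∀ m₀ ∈ Ioo L 0,
      HasDerivAt (fun m => ∫ t, t / (1 + c * m * t) ∂ν)
        (∫ t, -(c * (t / (1 + c * m₀ * t)) ^ 2) ∂ν) m₀ := by
    intro m₀ hm₀
    obtain ⟨ε, hε, m₁, hm₁, hball'⟩ := hball m₀ hm₀
    have hδ : 0 < 1 + c * m₁ * bν := hpos m₁ hm₁.1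
    refine (hasDerivAt_integral_of_dominated_loc_of_deriv_le (ball_mem_nhds m₀ hε)
      (F := fun m t => t / (1 + c * m * t))
      (F' := fun m t => -(c * (t / (1 + c * m * t)) ^ 2))
      (bound := fun _ => c * (bν / (1 + c * m₁ * bν)) ^ 2)
      (Eventually.of_forall fun m => hmeas1 m)
      (hint1 m₀ hm₀.1 hm₀.2.le)
      ((hmeas2 m₀).const_mul c).neg ?_ (integrable_const _) ?_).2
    · filter_upwards [hae] with t ht m hm
      obtain ⟨hm1, hm2⟩ := hball' m hm
      have hmI : L < m := lt_of_lt_of_le hm₁.1 hm1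
      have hq := hquot m hmI hm2.le t ht
      have hq1 := hquot m₁ hm₁.1 hm₁.2.le t ht
      have hmono : t / (1 + c * m * t) ≤ bν / (1 + c * m₁ * bν) := by
        obtain ⟨hp, hle⟩ := hdenpos m hmI hm2.le t ht
        have h3 : 0 < 1 + c * m * t := lt_of_lt_of_le hp hle
        have hd : 1 + c * m₁ * bν ≤ 1 + c * m * t := by
          have : c * m₁ * bν ≤ c * m * bν := by nlinarith
          linarith [hden m hm2.le t ht]
        exact div_le_div₀ (haν.le.trans (ht.1.trans ht.2)) ht.2 hδ hd
      rw [norm_neg, Real.norm_eq_abs, abs_of_nonneg (by positivity)]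
      have : (t / (1 + c * m * t)) ^ 2 ≤ (bν / (1 + c * m₁ * bν)) ^ 2 :=
        pow_le_pow_left₀ hq.1 hmono 2
      nlinarith
    · filter_upwards [hae] with t ht m hm
      obtain ⟨hm1, hm2⟩ := hball' m hm
      have hmI : L < m := lt_of_lt_of_le hm₁.1 hm1
      obtain ⟨hp, hle⟩ := hdenpos m hmI hm2.le t ht
      have h3 : (0:ℝ) < 1 + c * m * t := lt_of_lt_of_le hp hle
      have hd : HasDerivAt (fun m => 1 + c * m * t) (c * t) m := by
        simpa using (((hasDerivAt_id m).const_mul c).mul_const t).const_add 1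
      have := (hasDerivAt_const m t).div hd h3.ne'
      refine this.congr_deriv ?_
      field_simp
      ring
  -- Part 1: derivative of x
  have hderiv : ∀ m₀ ∈ Ioo L 0, HasDerivAt x (x' m₀) m₀ := by
    intro m₀ hm₀
    have hm0ne : m₀ ≠ 0 := ne_of_lt hm₀.2
    have h1 : HasDerivAt (fun m : ℝ => -(1 / m)) (1 / m₀ ^ 2) m₀ := by
      simpa [one_div] using (hasDerivAt_inv hm0ne).fun_neg
    have h3 := h1.add (hkey m₀ hm₀)
    have heq : x =ᶠ[nhds m₀] fun m => -(1 / m) + ∫ t, t / (1 + c * m * t) ∂ν :=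
      Filter.eventuallyEq_of_mem (isOpen_Ioo.mem_nhds hm₀) hx
    have h4 := h3.congr_of_eventuallyEq heq
    refine h4.congr_deriv ?_
    rw [hx' m₀ hm₀, integral_neg, integral_const_mul]
    ring
  -- Part 2: continuity of x'
  have hcont : ContinuousOn x' (Ioo L 0) := by
    intro m₀ hm₀
    apply ContinuousAt.continuousWithinAt
    obtain ⟨ε, hε, m₁, hm₁, hball'⟩ := hball m₀ hm₀
    have hδ : 0 < 1 + c * m₁ * bν := hpos m₁ hm₁.1
    have hA : ContinuousAt (fun m => ∫ t, (t / (1 + c * m * t)) ^ 2 ∂ν) m₀ := by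
      apply continuousAt_of_dominated (bound := fun _ => (bν / (1 + c * m₁ * bν)) ^ 2)
        (Eventually.of_forall fun m => hmeas2 m) ?_ (integrable_const _) ?_
      · filter_upwards [ball_mem_nhds m₀ hε] with m hm
        filter_upwards [hae] with t ht
        obtain ⟨hm1, hm2⟩ := hball' m hm
        have hmI : L < m := lt_of_lt_of_le hm₁.1 hm1
        have hq := hquot m hmI hm2.le t ht
        obtain ⟨hp, hle⟩ := hdenpos m hmI hm2.le t ht
        have hd : 1 + c * m₁ * bν ≤ 1 + c * m * t := by
          have : c * m₁ * bν ≤ c * m * bν := by nlinarith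
          linarith [hden m hm2.le t ht]
        have hmono : t / (1 + c * m * t) ≤ bν / (1 + c * m₁ * bν) :=
          div_le_div₀ (haν.le.trans (ht.1.trans ht.2)) ht.2 hδ hd
        rw [Real.norm_eq_abs, abs_of_nonneg (by positivity)]
        exact pow_le_pow_left₀ hq.1 hmono 2
      · filter_upwards [hae] with t ht
        obtain ⟨hp, hle⟩ := hdenpos m₀ hm₀.1 hm₀.2.le t ht
        have h3 : (0:ℝ) < 1 + c * m₀ * t := lt_of_lt_of_le hp hle
        have hc1 : ContinuousAt (fun m : ℝ => 1 + c * m * t) m₀ := by fun_prop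
        exact (ContinuousAt.div continuousAt_const hc1 h3.ne').pow 2
    have hg : ContinuousAt (fun m => 1 / m ^ 2 - c * ∫ t, (t / (1 + c * m * t)) ^ 2 ∂ν) m₀ := by
      have h0 : ContinuousAt (fun m : ℝ => 1 / m ^ 2) m₀ :=
        ContinuousAt.div continuousAt_const (by fun_prop) (pow_ne_zero 2 (ne_of_lt hm₀.2) : m₀ ^ 2 ≠ 0)
      exact h0.sub (continuousAt_const.mul hA)
    exact hg.congr (Filter.eventuallyEq_of_mem (isOpen_Ioo.mem_nhds hm₀) hx').symm
  -- Part 3: strict monotonicity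
  have hsm : StrictMonoOn x' (Ioo L 0) := by
    intro m hm m' hm' hlt
    rw [hx' m hm, hx' m' hm']
    have hIle : ∫ t, (t / (1 + c * m' * t)) ^ 2 ∂ν ≤ ∫ t, (t / (1 + c * m * t)) ^ 2 ∂ν := by
      apply integral_mono_ae (hint2 m' hm'.1 hm'.2.le) (hint2 m hm.1 hm.2.le)
      filter_upwards [hae] with t ht
      have h1 := hdenpos m hm.1 hm.2.le t ht
      have h2 := hdenpos m' hm'.1 hm'.2.le t ht
      have hd1 : 0 < 1 + c * m * t := lt_of_lt_of_le h1.1 h1.2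
      have hd2 : 0 < 1 + c * m' * t := lt_of_lt_of_le h2.1 h2.2
      have ht0 : 0 < t := lt_of_lt_of_le haν ht.1
      have hle : 1 + c * m * t ≤ 1 + c * m' * t := by nlinarith [mul_pos (mul_pos hc ht0) (sub_pos.mpr hlt)]
      have hdiv : t / (1 + c * m' * t) ≤ t / (1 + c * m * t) :=
        div_le_div_of_nonneg_left ht0.le hd1 hle
      exact pow_le_pow_left₀ (div_nonneg ht0.le hd2.le) hdiv 2
    have h12 : 1 / m ^ 2 < 1 / m' ^ 2 := by
      apply one_div_lt_one_div_of_lt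
      · exact pow_two_pos_of_ne_zero (ne_of_lt hm'.2)
      · have h1 := hm.2; have h2 := hm'.2; nlinarith
    have := mul_le_mul_of_nonneg_left hIle hc.le
    linarith
  -- Part 4: tendsto atTop
  have htend : Tendsto x' (nhdsWithin 0 (Iio 0)) atTop := by
    have hL2 : L / 2 ∈ Ioo L 0 := ⟨by linarith, by linarith⟩
    have hδ0 : 0 < 1 + c * (L / 2) * bν := hpos _ hL2.1
    have hbound : ∀ m ∈ Ioo (L / 2) 0,
        1 / m ^ 2 - c * (bν / (1 + c * (L / 2) * bν)) ^ 2 ≤ x' m := by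
      intro m hm
      have hmI : m ∈ Ioo L 0 := ⟨lt_trans hL2.1 hm.1, hm.2⟩
      rw [hx' m hmI]
      have hInt : ∫ t, (t / (1 + c * m * t)) ^ 2 ∂ν ≤ (bν / (1 + c * (L / 2) * bν)) ^ 2 := by
        have key := integral_mono_ae (hint2 m hmI.1 hmI.2.le)
          (integrable_const ((bν / (1 + c * (L / 2) * bν)) ^ 2)) ?_
        · simpa using key
        · filter_upwards [hae] with t ht
          have hq := hquot m hmI.1 hmI.2.le t ht
          have h1 : 1 + c * (L / 2) * bν ≤ 1 + c * m * bν := by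
            nlinarith [hm.1, mul_pos hc hb]
          have h2 : t / (1 + c * m * t) ≤ bν / (1 + c * (L / 2) * bν) :=
            le_trans hq.2 (div_le_div_of_nonneg_left hb.le hδ0 h1)
          exact pow_le_pow_left₀ hq.1 h2 2
      have := mul_le_mul_of_nonneg_left hInt hc.le
      linarith
    have h2 : Tendsto (fun m : ℝ => 1 / m ^ 2 - c * (bν / (1 + c * (L / 2) * bν)) ^ 2)
        (nhdsWithin 0 (Iio 0)) atTop := by
      have hsq : Tendsto (fun m : ℝ => m ^ 2) (nhdsWithin 0 (Iio 0)) (nhdsWithin 0 (Ioi 0)) := by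
        apply tendsto_nhdsWithin_of_tendsto_nhds_of_eventually_within
        · have hcont2 : Tendsto (fun m : ℝ => m ^ 2) (nhds 0) (nhds 0) := by
            simpa using (continuous_pow 2).tendsto (0:ℝ)
          exact hcont2.mono_left nhdsWithin_le_nhds
        · filter_upwards [self_mem_nhdsWithin] with m hm
          exact mem_Ioi.mpr (pow_two_pos_of_ne_zero (ne_of_lt hm))
      have h3 := tendsto_inv_nhdsGT_zero.comp hsq
      have h4 := tendsto_atTop_add_const_right (nhdsWithin (0:ℝ) (Iio 0))
        (-(c * (bν / (1 + c * (L / 2) * bν)) ^ 2)) h3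
      refine h4.congr fun m => ?_
      simp [Function.comp, one_div, sub_eq_add_neg]
    apply tendsto_atTop_mono' _ _ h2
    filter_upwards [Ioo_mem_nhdsLT_of_mem (show (0:ℝ) ∈ Ioc (L/2) 0 from ⟨by linarith, le_refl _⟩)]
      with m hm
    exact hbound m hm
  exact ⟨hderiv, hcont, hsm, htend⟩
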